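/- Let Δ be a t-norm on [0,1] and ★ a binary operation on [0,1] with 1 ★ 0 = 0 and 1 ★ 1 = 1. Define (f ∧ g)(x) = sup{ f(y) ★ g(z) : y Δ z = x }. If for every closed interval [a,b] ⊆ [0,1] the convolution of the characteristic function of [0,1] with the characteristic function of [a,b] equals the characteristic function of [0,b] (axiom (O5)), then for every b ∈ [0,1] the function x ↦ x Δ b is continuous, and hence Δ is a continuous t-norm. -/

import Mathlib

open unitInterval Classical

instance : Fact ((0:ℝ) ≤ 1) := ⟨zero_le_one⟩

/-- convolution `(f ∧ g)(x) = sup { star (f y) (g z) : delta y z = x }` -/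
noncomputable def conv (star delta : I → I → I) (f g : I → I) (x : I) : I :=
  sSup {v | ∃ y z, delta y z = x ∧ v = star (f y) (g z)}

/-- characteristic function of a set -/
noncomputable def ind (B : Set I) : I → I := fun x => if x ∈ B then 1 else 0

/-- From continuity, approximate from below eventually. -/
lemma approx_lt (f : I → I) (hf : Continuous f) (x0 l : I) (hl : l < f x0) :
    ∃ x1, (∀ᶠ x in nhds x0, x1 ≤ x) ∧ l < f x1 := by
  by_cases h0 : x0 = 0
  · exact ⟨x0, Filter.Eventually.of_forall (fun x => h0 ▸ nonneg'), hl⟩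
  · have hne : (Set.Iio x0).Nonempty := ⟨0, lt_of_le_of_ne nonneg' (Ne.symm h0)⟩
    haveI : Filter.NeBot (nhdsWithin x0 (Set.Iio x0)) := nhdsWithin_Iio_self_neBot' hne
    have hev : {x | l < f x} ∈ nhds x0 :=
      (isOpen_Ioi.preimage hf).mem_nhds hl
    have hmem : {x | l < f x} ∩ Set.Iio x0 ∈ nhdsWithin x0 (Set.Iio x0) :=
      Filter.inter_mem (mem_nhdsWithin_of_mem_nhds hev) self_mem_nhdsWithin
    obtain ⟨x1, hx1, hx1lt⟩ := Filter.nonempty_of_mem hmem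
    exact ⟨x1, (eventually_gt_nhds hx1lt).mono (fun x hx => hx.le), hx1⟩

/-- From continuity, approximate from above eventually. -/
lemma approx_gt (f : I → I) (hf : Continuous f) (x0 u : I) (hu : f x0 < u) :
    ∃ x1, (∀ᶠ x in nhds x0, x ≤ x1) ∧ f x1 < u := by
  by_cases h0 : x0 = 1
  · exact ⟨x0, Filter.Eventually.of_forall (fun x => h0 ▸ le_one'), hu⟩
  · have hne : (Set.Ioi x0).Nonempty := ⟨1, lt_of_le_of_ne le_one' h0⟩
    haveI : Filter.NeBot (nhdsWithin x0 (Set.Ioi x0)) := nhdsGT_neBot_of_exists_gt hne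
    have hev : {x | f x < u} ∈ nhds x0 :=
      (isOpen_Iio.preimage hf).mem_nhds hu
    have hmem : {x | f x < u} ∩ Set.Ioi x0 ∈ nhdsWithin x0 (Set.Ioi x0) :=
      Filter.inter_mem (mem_nhdsWithin_of_mem_nhds hev) self_mem_nhdsWithin
    obtain ⟨x1, hx1, hx1gt⟩ := Filter.nonempty_of_mem hmem
    exact ⟨x1, (eventually_lt_nhds hx1gt).mono (fun x hx => hx.le), hx1⟩

theorem stmt_19 (delta : I → I → I)
    (hcomm : ∀ x y, delta x y = delta y x)
    (hassoc : ∀ x y z, delta (delta x y) z = delta x (delta y z))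
    (hmono : ∀ x x' y y', x ≤ x' → y ≤ y' → delta x y ≤ delta x' y')
    (hone : ∀ x, delta 1 x = x)
    (star : I → I → I)
    (h10 : star 1 0 = 0) (h11 : star 1 1 = 1)
    (hO5 : ∀ a b : I, a ≤ b →
      conv star delta (ind Set.univ) (ind (Set.Icc a b)) = ind (Set.Icc 0 b)) :
    (∀ b : I, Continuous (fun x => delta x b)) ∧
      Continuous (fun p : I × I => delta p.1 p.2) := by
  -- upper bound of sections
  have hub : ∀ x b : I, delta x b ≤ b := fun x b => by
    have := hmono x 1 b b le_one' le_rfl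
    rwa [hone] at this
  -- surjectivity of sections onto [0, b]
  have hsurj : ∀ b v : I, v ≤ b → ∃ x, delta x b = v := by
    intro b v hvb
    have h := hO5 b b le_rfl
    have hx : conv star delta (ind Set.univ) (ind (Set.Icc b b)) v
        = ind (Set.Icc 0 b) v := by rw [h]
    have hrhs : ind (Set.Icc 0 b) v = 1 := by
      simp [ind, Set.mem_Icc, nonneg', hvb]
    rw [hrhs] at hx
    set S : Set I := {w | ∃ y z, delta y z = v ∧ w = star (ind Set.univ y) (ind (Set.Icc b b) z)}
    have h1S : (1 : I) ∈ S := by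
      by_contra h1
      have hS0 : S ⊆ {0} := by
        rintro w ⟨y, z, hyz, hw⟩
        by_cases hz : z = b
        · exact absurd ⟨y, z, hyz, by simp [ind, hz, h11]⟩ h1
        · show w = 0
          rw [hw]
          simp [ind, hz, h10]
      have : sSup S ≤ 0 := sSup_le (fun w hw => le_of_eq (hS0 hw))
      rw [show conv star delta (ind Set.univ) (ind (Set.Icc b b)) v = sSup S from rfl] at hx
      rw [hx] at this
      exact absurd this (not_le.mpr zero_lt_one)
    obtain ⟨y, z, hyz, h1⟩ := h1S
    by_cases hz : z ∈ Set.Icc b b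
    · have hzb : z = b := le_antisymm hz.2 hz.1
      exact ⟨y, hzb ▸ hyz⟩
    · exfalso
      have hzb : z ≠ b := fun h => hz (by rw [h]; exact Set.mem_Icc.mpr ⟨le_rfl, le_rfl⟩)
      rw [show ind Set.univ y = 1 by simp [ind], show ind (Set.Icc b b) z = 0 by simp [ind, hzb], h10] at h1
      exact zero_ne_one h1.symm
  -- continuity of sections
  have hsec : ∀ b : I, Continuous (fun x => delta x b) := by
    intro b
    rw [continuous_iff_continuousAt]
    intro x0
    rw [ContinuousAt, tendsto_order]
    constructor
    · intro l hl
      obtain ⟨v, hlv, hvd⟩ := exists_between hl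
      obtain ⟨x1, hx1⟩ := hsurj b v (hvd.le.trans (hub x0 b))
      have hx1x0 : x1 < x0 := by
        by_contra hle
        exact absurd (hmono x0 x1 b b (not_lt.mp hle) le_rfl) (not_le.mpr (hx1 ▸ hvd))
      filter_upwards [eventually_gt_nhds hx1x0] with x hx
      exact hlv.trans_le (hx1 ▸ hmono x1 x b b hx.le le_rfl)
    · intro u hu
      by_cases hbu : b < u
      · exact Filter.Eventually.of_forall (fun x => (hub x b).trans_lt hbu)
      · obtain ⟨v, hdv, hvu⟩ := exists_between hu
        obtain ⟨x1, hx1⟩ := hsurj b v (hvu.le.trans (not_lt.mp hbu))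
        have hx0x1 : x0 < x1 := by
          by_contra hle
          exact absurd (hmono x1 x0 b b (not_lt.mp hle) le_rfl) (not_le.mpr (hx1 ▸ hdv))
        filter_upwards [eventually_lt_nhds hx0x1] with x hx
        exact lt_of_le_of_lt (hx1 ▸ hmono x x1 b b hx.le le_rfl) hvu
  refine ⟨hsec, ?_⟩
  -- joint continuity
  rw [continuous_iff_continuousAt]
  rintro ⟨x0, y0⟩
  have hsec2 : ∀ a : I, Continuous (fun y => delta a y) := by
    intro a
    have := hsec a
    simp only [hcomm _ a] at this
    exact this
  rw [ContinuousAt, tendsto_order]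
  constructor
  · intro l hl
    obtain ⟨y1, hy1ev, hy1⟩ := approx_lt (fun y => delta x0 y) (hsec2 x0) y0 l hl
    obtain ⟨x1, hx1ev, hx1⟩ := approx_lt (fun x => delta x y1) (hsec y1) x0 l hy1
    rw [nhds_prod_eq]
    filter_upwards [Filter.prod_mem_prod (hx1ev) (hy1ev)] with p hp
    exact hx1.trans_le (hmono x1 p.1 y1 p.2 hp.1 hp.2)
  · intro u hu
    obtain ⟨y1, hy1ev, hy1⟩ := approx_gt (fun y => delta x0 y) (hsec2 x0) y0 u hu
    obtain ⟨x1, hx1ev, hx1⟩ := approx_gt (fun x => delta x y1) (hsec y1) x0 u hy1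
    rw [nhds_prod_eq]
    filter_upwards [Filter.prod_mem_prod (hx1ev) (hy1ev)] with p hp
    exact lt_of_le_of_lt (hmono p.1 x1 p.2 y1 hp.1 hp.2) hx1
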